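/- Let X and Y be metric spaces with X complete, let Y' ⊆ Y and X' = f⁻¹(Y') for a continuous map f : X → Y. If the restriction f|_{X'} : X' → Y' is open and surjective, then there exists a subset X₀ ⊆ X', relatively closed in X', such that f|_{X₀} : X₀ → Y' is surjective and the density character of X₀ equals the density character of Y'. -/
import Mathlib

noncomputable def densityCharacter (X : Type*) [TopologicalSpace X] : Cardinal :=
  sInf {c | ∃ s : Set X, Dense s ∧ Cardinal.mk s = c}

lemma densityCharacter_le {X : Type*} [TopologicalSpace X] {s : Set X} (hs : Dense s) :
    densityCharacter X ≤ Cardinal.mk s :=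
  csInf_le' ⟨s, hs, rfl⟩

lemma exists_dense_mk_eq (X : Type*) [TopologicalSpace X] :
    ∃ s : Set X, Dense s ∧ Cardinal.mk s = densityCharacter X := by
  have hne : {c | ∃ s : Set X, Dense s ∧ Cardinal.mk s = c}.Nonempty :=
    ⟨_, Set.univ, dense_univ, rfl⟩
  exact csInf_mem hne

lemma densityCharacter_le_of_surj {A B : Type u} [TopologicalSpace A] [TopologicalSpace B]
    {g : A → B} (hc : Continuous g) (hsurj : Function.Surjective g) :
    densityCharacter B ≤ densityCharacter A := by
  obtain ⟨s, hs, hcard⟩ := exists_dense_mk_eq A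
  calc densityCharacter B ≤ Cardinal.mk (g '' s) :=
        densityCharacter_le (hsurj.denseRange.dense_image hc hs)
    _ ≤ Cardinal.mk s := Cardinal.mk_image_le
    _ = densityCharacter A := hcard

lemma densityCharacter_of_finite {X : Type*} [TopologicalSpace X] [T1Space X] [Finite X] :
    densityCharacter X = Cardinal.mk X := by
  apply le_antisymm
  · simpa using densityCharacter_le (dense_univ (X := X))
  · have hne : {c | ∃ s : Set X, Dense s ∧ Cardinal.mk s = c}.Nonempty :=
      ⟨_, Set.univ, dense_univ, rfl⟩
    apply le_csInf hne
    rintro c ⟨s, hs, rfl⟩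
    have h1 : closure s = s := (Set.toFinite s).isClosed.closure_eq
    have h2 : s = Set.univ := by rw [← h1]; exact hs.closure_eq
    subst h2
    simp

theorem stmt2 {X Y : Type u} [MetricSpace X] [MetricSpace Y] [CompleteSpace X]
    (f : X → Y) (hf : Continuous f) (Y' : Set Y)
    (hmaps : Set.MapsTo f (f ⁻¹' Y') Y')
    (ho : IsOpenMap (hmaps.restrict f (f ⁻¹' Y') Y'))
    (hs : Function.Surjective (hmaps.restrict f (f ⁻¹' Y') Y')) :
    ∃ X₀ : Set X, X₀ ⊆ f ⁻¹' Y' ∧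
      IsClosed {x : f ⁻¹' Y' | (x : X) ∈ X₀} ∧
      f '' X₀ = Y' ∧
      densityCharacter X₀ = densityCharacter Y' := by
  classical
  set F := hmaps.restrict f (f ⁻¹' Y') Y' with hFdef
  have hFval : ∀ x : f ⁻¹' Y', (F x : Y) = f x := fun x => hmaps.val_restrict_apply x
  by_cases hfin : densityCharacter Y' < Cardinal.aleph0
  · -- finite case
    obtain ⟨D, hD, hDcard⟩ := exists_dense_mk_eq ↥Y'
    have hDfin : D.Finite := Cardinal.lt_aleph0_iff_set_finite.mp (by rw [hDcard]; exact hfin)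
    have huniv : (Set.univ : Set ↥Y').Finite := by
      rw [← hD.closure_eq, hDfin.isClosed.closure_eq]; exact hDfin
    have hYfin : Finite ↥Y' := Set.finite_univ_iff.mp huniv
    set g := Function.surjInv hs with hgdef
    have hg : ∀ y, F (g y) = y := Function.surjInv_eq hs
    have hginj : Function.Injective g := Function.injective_surjInv hs
    have hX0fin : (Subtype.val '' Set.range g).Finite := (Set.finite_range g).image _
    refine ⟨Subtype.val '' Set.range g, Subtype.coe_image_subset _ _, ?_, ?_, ?_⟩
    · exact hX0fin.isClosed.preimage continuous_subtype_val
    · ext y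
      constructor
      · rintro ⟨x, ⟨x', ⟨y', rfl⟩, rfl⟩, rfl⟩
        have : f ↑(g y') = ↑(F (g y')) := (hFval _).symm
        rw [this, hg y']
        exact y'.2
      · intro hy
        refine ⟨↑(g ⟨y, hy⟩), ⟨g ⟨y, hy⟩, ⟨⟨y, hy⟩, rfl⟩, rfl⟩, ?_⟩
        rw [← hFval, hg]
    · have : Finite ↥(Subtype.val '' Set.range g) := hX0fin.to_subtype
      rw [densityCharacter_of_finite, densityCharacter_of_finite]
      rw [← Cardinal.mk_univ, ← Cardinal.mk_univ (α := ↥Y')]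
      simp only [Cardinal.mk_univ]
      calc Cardinal.mk ↥(Subtype.val '' Set.range g)
          = Cardinal.mk ↥(Set.range g) := Cardinal.mk_image_eq Subtype.val_injective
        _ = Cardinal.mk ↥Y' := Cardinal.mk_range_eq g hginj
  · -- infinite case
    have hκ' : Cardinal.aleph0 ≤ densityCharacter ↥Y' := not_lt.mp hfin
    obtain ⟨D, hD, hDcard⟩ := exists_dense_mk_eq ↥Y'
    have hDne : Nonempty ↥D := by
      have h0 : (0 : Cardinal) < Cardinal.mk ↥D := by
        rw [hDcard]; exact lt_of_lt_of_le Cardinal.aleph0_pos hκ'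
      exact Cardinal.mk_ne_zero_iff.mp h0.ne'
    have hX'ne : Nonempty ↥(f ⁻¹' Y') := by
      obtain ⟨d⟩ := hDne
      exact ⟨(hs d.1).choose⟩
    let x' : ↥(f ⁻¹' Y') := Classical.arbitrary _
    set r : ℕ → ℝ := fun n => (2⁻¹ : ℝ) ^ n with hrdef
    have hrpos : ∀ n, 0 < r n := fun n => by positivity
    set P : ℕ → ↥(f ⁻¹' Y') → ↥Y' → ℚ → Prop := fun m x d q =>
      ∃ z, dist x z < r m ∧ Metric.ball d (q : ℝ) ⊆ F '' Metric.ball z (r (m+1)) with hPdef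
    set w : ℕ → ↥(f ⁻¹' Y') → ↥Y' → ℚ → ↥(f ⁻¹' Y') := fun m x d q =>
      if h : P m x d q then h.choose else x' with hwdef
    have hw : ∀ m x d q, P m x d q → dist x (w m x d q) < r m ∧
        Metric.ball d (q : ℝ) ⊆ F '' Metric.ball (w m x d q) (r (m+1)) := by
      intro m x d q h
      simp only [hwdef, dif_pos h]
      exact h.choose_spec
    set P0 : ↥Y' → ℚ → Prop := fun d q =>
      ∃ z, Metric.ball d (q : ℝ) ⊆ F '' Metric.ball z (r 1) with hP0def
    set w0 : ↥Y' → ℚ → ↥(f ⁻¹' Y') := fun d q =>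
      if h : P0 d q then h.choose else x' with hw0def
    have hw0 : ∀ d q, P0 d q →
        Metric.ball d (q : ℝ) ⊆ F '' Metric.ball (w0 d q) (r 1) := by
      intro d q h
      simp only [hw0def, dif_pos h]
      exact h.choose_spec
    set S : ℕ → Set ↥(f ⁻¹' Y') := fun n =>
      Nat.rec (Set.range fun p : ↥D × ℚ => w0 p.1.1 p.2)
        (fun n Sn => ⋃ p : ↥D × ℚ, (fun x => w (n+1) x p.1.1 p.2) '' Sn) n with hSdef
    have hS0 : S 0 = Set.range fun p : ↥D × ℚ => w0 p.1.1 p.2 := rfl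
    have hSsucc : ∀ n, S (n+1) = ⋃ p : ↥D × ℚ, (fun x => w (n+1) x p.1.1 p.2) '' S n :=
      fun _ => rfl
    have hbasic : ∀ (y : ↥Y') (W : Set ↥Y'), IsOpen W → y ∈ W →
        ∃ (d : ↥D) (q : ℚ), y ∈ Metric.ball (d.1 : ↥Y') (q : ℝ) ∧
          Metric.ball (d.1 : ↥Y') (q : ℝ) ⊆ W := by
      intro y W hW hyW
      obtain ⟨ε, hε, hball⟩ := Metric.isOpen_iff.mp hW y hyW
      obtain ⟨d, hdb, hdD⟩ := Metric.dense_iff.mp hD y (ε/4) (by linarith)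
      obtain ⟨q, hq1, hq2⟩ := exists_rat_btwn (show ε/4 < ε/2 by linarith)
      have hdy : dist d y < ε/4 := Metric.mem_ball.mp hdb
      refine ⟨⟨d, hdD⟩, q, ?_, ?_⟩
      · rw [Metric.mem_ball, dist_comm]
        exact lt_trans hdy hq1
      · intro v hv
        apply hball
        rw [Metric.mem_ball] at hv ⊢
        calc dist v y ≤ dist v d + dist d y := dist_triangle _ _ _
          _ < (q : ℝ) + ε/4 := by linarith
          _ < ε := by linarith
    have key : ∀ (y : ↥Y') (n : ℕ) (x : ↥(f ⁻¹' Y')), y ∈ F '' Metric.ball x (r (n+1)) →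
        ∃ (d : ↥D) (q : ℚ),
          dist x (w (n+1) x d.1 q) < r (n+1) ∧
          y ∈ F '' Metric.ball (w (n+1) x d.1 q) (r (n+2)) := by
      intro y n x hy
      obtain ⟨z, hz, hFz⟩ := hy
      have hyW : y ∈ F '' Metric.ball z (r (n+2)) :=
        ⟨z, Metric.mem_ball_self (hrpos _), hFz⟩
      obtain ⟨d, q, hyq, hqW⟩ := hbasic y _ (ho _ Metric.isOpen_ball) hyW
      have hP : P (n+1) x d.1 q := ⟨z, by rw [dist_comm]; exact Metric.mem_ball.mp hz, hqW⟩
      obtain ⟨h1, h2⟩ := hw (n+1) x d.1 q hP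
      exact ⟨d, q, h1, h2 hyq⟩
    have base : ∀ y : ↥Y', ∃ (d : ↥D) (q : ℚ), y ∈ F '' Metric.ball (w0 d.1 q) (r 1) := by
      intro y
      obtain ⟨z, hFz⟩ := hs y
      have hyW : y ∈ F '' Metric.ball z (r 1) :=
        ⟨z, Metric.mem_ball_self (hrpos _), hFz⟩
      obtain ⟨d, q, hyq, hqW⟩ := hbasic y _ (ho _ Metric.isOpen_ball) hyW
      exact ⟨d, q, hw0 d.1 q ⟨z, hqW⟩ hyq⟩
    set Sset : Set X := Subtype.val '' ⋃ n, S n with hSsetdef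
    have main : ∀ y : ↥Y', ∃ ξ : X, ξ ∈ closure Sset ∧ f ξ = ↑y := by
      intro y
      have chain : ∀ (n : ℕ) (x : ↥(f ⁻¹' Y')), x ∈ S n → y ∈ F '' Metric.ball x (r (n+1)) →
          ∃ x₁, x₁ ∈ S (n+1) ∧ y ∈ F '' Metric.ball x₁ (r (n+2)) ∧ dist x x₁ < r (n+1) := by
        intro n x hxS hI
        obtain ⟨d, q, h1, h2⟩ := key y n x hI
        refine ⟨w (n+1) x d.1 q, ?_, h2, h1⟩
        rw [hSsucc]
        exact Set.mem_iUnion.mpr ⟨(d, q), Set.mem_image_of_mem _ hxS⟩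
      choose! next hnS hnI hnd using chain
      obtain ⟨d0, q0, hI0⟩ := base y
      have hx0S : w0 d0.1 q0 ∈ S 0 := by rw [hS0]; exact ⟨(d0, q0), rfl⟩
      set u : ℕ → ↥(f ⁻¹' Y') := fun n => Nat.rec (w0 d0.1 q0) (fun n x => next n x) n
        with hudef
      have husucc : ∀ n, u (n+1) = next n (u n) := fun _ => rfl
      have hu : ∀ n, u n ∈ S n ∧ y ∈ F '' Metric.ball (u n) (r (n+1)) := by
        intro n
        induction n with
        | zero => exact ⟨hx0S, hI0⟩
        | succ n ih =>
          rw [husucc]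
          exact ⟨hnS n (u n) ih.1 ih.2, hnI n (u n) ih.1 ih.2⟩
      have hud : ∀ n, dist (u n) (u (n+1)) < r (n+1) := by
        intro n
        rw [husucc]
        exact hnd n (u n) (hu n).1 (hu n).2
      have hcs : CauchySeq fun n => (u n : X) := by
        apply cauchySeq_of_le_geometric (2⁻¹ : ℝ) (2⁻¹ : ℝ) (by norm_num)
        intro n
        have h := (hud n).le
        rw [Subtype.dist_eq] at h
        calc dist ((u n : X)) ((u (n+1) : X)) ≤ r (n+1) := h
          _ = 2⁻¹ * 2⁻¹ ^ n := by simp only [hrdef]; ring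
      obtain ⟨ξ, hξ⟩ := cauchySeq_tendsto_of_complete hcs
      choose z hz hFz using fun n => (hu n).2
      have hdz : ∀ n, dist ((u n : X)) ((z n : X)) ≤ (2⁻¹ : ℝ) ^ n := by
        intro n
        have h1 : dist (z n) (u n) < r (n+1) := Metric.mem_ball.mp (hz n)
        rw [Subtype.dist_eq] at h1
        have h2 : r (n+1) ≤ r n :=
          pow_le_pow_of_le_one (by norm_num) (by norm_num) (Nat.le_succ n)
        rw [dist_comm]
        exact (h1.le.trans h2)
      have hzlim : Filter.Tendsto (fun n => (z n : X)) Filter.atTop (nhds ξ) := by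
        apply hξ.congr_dist
        exact squeeze_zero (fun n => dist_nonneg) hdz
          (tendsto_pow_atTop_nhds_zero_of_lt_one (by norm_num) (by norm_num))
      have hfz : ∀ n, f (z n : X) = (y : Y) := fun n => by rw [← hFval, hFz n]
      have hfξ : f ξ = ↑y := by
        have h1 : Filter.Tendsto (fun n => f (z n : X)) Filter.atTop (nhds (f ξ)) :=
          (hf.tendsto ξ).comp hzlim
        have h2 : (fun n => f (z n : X)) = fun _ => (y : Y) := funext hfz
        rw [h2] at h1
        exact tendsto_nhds_unique h1 tendsto_const_nhds
      refine ⟨ξ, mem_closure_of_tendsto hξ (Filter.Eventually.of_forall fun n => ?_), hfξ⟩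
      exact ⟨u n, Set.mem_iUnion.mpr ⟨n, (hu n).1⟩, rfl⟩
    have hDq : Cardinal.mk (↥D × ℚ) ≤ densityCharacter ↥Y' := by
      rw [Cardinal.mk_prod, Cardinal.lift_uzero, Cardinal.mkRat, Cardinal.lift_aleph0, hDcard]
      exact le_of_eq (Cardinal.mul_eq_left hκ' hκ' Cardinal.aleph0_ne_zero)
    have hScard : ∀ n, Cardinal.mk (S n) ≤ densityCharacter ↥Y' := by
      intro n
      induction n with
      | zero => rw [hS0]; exact Cardinal.mk_range_le.trans hDq
      | succ n ih =>
        rw [hSsucc]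
        calc Cardinal.mk ↥(⋃ p : ↥D × ℚ, (fun x => w (n+1) x p.1.1 p.2) '' S n)
            ≤ Cardinal.mk (↥D × ℚ) *
              ⨆ p : ↥D × ℚ, Cardinal.mk ↥((fun x => w (n+1) x p.1.1 p.2) '' S n) :=
              Cardinal.mk_iUnion_le _
          _ ≤ densityCharacter ↥Y' * densityCharacter ↥Y' :=
              mul_le_mul' hDq (ciSup_le' fun p => Cardinal.mk_image_le.trans ih)
          _ = densityCharacter ↥Y' := Cardinal.mul_eq_self hκ'
    have hUcard : Cardinal.mk ↥(⋃ n, S n) ≤ densityCharacter ↥Y' := by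
      have hre : (⋃ n, S n) = ⋃ m : ULift.{u} ℕ, S m.down := by
        ext x
        simp only [Set.mem_iUnion]
        exact ⟨fun ⟨n, h⟩ => ⟨⟨n⟩, h⟩, fun ⟨m, h⟩ => ⟨m.down, h⟩⟩
      rw [hre]
      calc Cardinal.mk ↥(⋃ m : ULift.{u} ℕ, S m.down)
          ≤ Cardinal.mk (ULift.{u} ℕ) * ⨆ m : ULift.{u} ℕ, Cardinal.mk (S m.down) :=
            Cardinal.mk_iUnion_le _
        _ ≤ Cardinal.aleph0 * densityCharacter ↥Y' := by
            apply mul_le_mul'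
            · rw [Cardinal.mk_uLift]
              simp
            · exact ciSup_le' fun m => hScard m.down
        _ = densityCharacter ↥Y' := by
            rw [mul_comm]
            exact Cardinal.mul_eq_left hκ' hκ' Cardinal.aleph0_ne_zero
    have hSsetX' : Sset ⊆ f ⁻¹' Y' := by
      rintro a ⟨x, hx, rfl⟩
      exact x.2
    set X₀ : Set X := closure Sset ∩ f ⁻¹' Y' with hX₀def
    refine ⟨X₀, Set.inter_subset_right, ?_, ?_, ?_⟩
    · have heq : {x : ↥(f ⁻¹' Y') | (x : X) ∈ X₀} = Subtype.val ⁻¹' closure Sset := by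
        ext x
        simp only [hX₀def, Set.mem_setOf_eq, Set.mem_inter_iff, Set.mem_preimage]
        exact ⟨fun h => h.1, fun h => ⟨h, x.2⟩⟩
      rw [heq]
      exact isClosed_closure.preimage continuous_subtype_val
    · ext yy
      constructor
      · rintro ⟨x, ⟨_, hx2⟩, rfl⟩
        exact hx2
      · intro hy
        obtain ⟨ξ, hξc, hξf⟩ := main ⟨yy, hy⟩
        have hξX' : ξ ∈ f ⁻¹' Y' := by
          show f ξ ∈ Y'
          rw [hξf]
          exact hy
        exact ⟨ξ, ⟨hξc, hξX'⟩, hξf⟩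
    · apply le_antisymm
      · have hsub : Sset ⊆ X₀ := fun a ha => ⟨subset_closure ha, hSsetX' ha⟩
        have hdense : Dense (Subtype.val ⁻¹' Sset : Set ↥X₀) := by
          intro x
          rw [closure_subtype]
          have himg : Subtype.val '' (Subtype.val ⁻¹' Sset : Set ↥X₀) = X₀ ∩ Sset :=
            Subtype.image_preimage_coe _ _
          rw [himg, Set.inter_eq_right.mpr hsub]
          exact x.2.1
        calc densityCharacter ↥X₀
            ≤ Cardinal.mk ↥(Subtype.val ⁻¹' Sset : Set ↥X₀) := densityCharacter_le hdense
          _ ≤ Cardinal.mk ↥Sset := Cardinal.mk_preimage_of_injective _ _ Subtype.val_injective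
          _ ≤ Cardinal.mk ↥(⋃ n, S n) := by rw [hSsetdef]; exact Cardinal.mk_image_le
          _ ≤ densityCharacter ↥Y' := hUcard
      · have hsurj : Function.Surjective
            (fun x : ↥X₀ => (⟨f x.1, x.2.2⟩ : ↥Y')) := by
          intro y
          obtain ⟨ξ, hξc, hξf⟩ := main y
          have hξX' : ξ ∈ f ⁻¹' Y' := by
            show f ξ ∈ Y'
            rw [hξf]
            exact y.2
          exact ⟨⟨ξ, hξc, hξX'⟩, Subtype.ext hξf⟩
        have hcont : Continuous (fun x : ↥X₀ => (⟨f x.1, x.2.2⟩ : ↥Y')) :=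
          Continuous.subtype_mk (hf.comp continuous_subtype_val) _
        exact densityCharacter_le_of_surj hcont hsurj
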